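/- For η > 0, the brackets [X₀,X₁]=−X₂, [X₀,X₂]=−X₁, [X₁,X₂]=0, [x⁰,x¹]=ηx¹, [x⁰,x²]=ηx², [x¹,x²]=0, [x⁰,X₀]=0, [x⁰,X₁]=−ηX₁, [x⁰,X₂]=−ηX₂, [x¹,X₀]=−x², [x¹,X₁]=ηX₀, [x¹,X₂]=x⁰, [x²,X₀]=−x¹, [x²,X₁]=x⁰, [x²,X₂]=ηX₀ define a Lie algebra structure D' on the 6-dimensional real vector space with basis {X₀,X₁,X₂,x⁰,x¹,x²} (the classical double D(iso(1,1))), and the linear map ψ' : g_{η²} → D' determined by ψ'(J)=(X₂−x¹)/√(2η), ψ'(K₁)=−x⁰/η, ψ'(K₂)=−(X₂+x¹)/√(2η), ψ'(P₀)=√(η/2)(X₁−x²), ψ'(P₁)=√(η/2)(X₁+x²), ψ'(P₂)=−ηX₀ is a Lie algebra isomorphism. -/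

import Mathlib

set_option maxHeartbeats 2000000

noncomputable section

@[simp] lemma cons_val_five {α : Type*} (a b c d e f : α) :
    (![a,b,c,d,e,f] : Fin 6 → α) 5 = f := rfl


/-- structure constants of D(iso(1,1)) -/
def brf (η : ℝ) (u v : Fin 6 → ℝ) : Fin 6 → ℝ :=
  ![η*(u 4*v 1 - u 1*v 4) + η*(u 5*v 2 - u 2*v 5),
    -(u 0*v 2 - u 2*v 0) - η*(u 3*v 1 - u 1*v 3),
    -(u 0*v 1 - u 1*v 0) - η*(u 3*v 2 - u 2*v 3),
    (u 4*v 2 - u 2*v 4) + (u 5*v 1 - u 1*v 5),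
    η*(u 3*v 4 - u 4*v 3) - (u 5*v 0 - u 0*v 5),
    η*(u 3*v 5 - u 5*v 3) - (u 4*v 0 - u 0*v 4)]

def brL (η : ℝ) : (Fin 6 → ℝ) →ₗ[ℝ] (Fin 6 → ℝ) →ₗ[ℝ] (Fin 6 → ℝ) :=
  LinearMap.mk₂ ℝ (brf η)
    (by intro u u' v; funext k; fin_cases k <;> simp [brf, Matrix.cons_val_succ] <;> ring)
    (by intro c u v; funext k; fin_cases k <;> simp [brf, Matrix.cons_val_succ] <;> ring)
    (by intro u v v'; funext k; fin_cases k <;> simp [brf, Matrix.cons_val_succ] <;> ring)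
    (by intro c u v; funext k; fin_cases k <;> simp [brf, Matrix.cons_val_succ] <;> ring)

def AL (t : ℝ) : (Fin 6 → ℝ) →ₗ[ℝ] (Fin 6 → ℝ) where
  toFun c := ![ -(2*t^2*c 3), t*(c 1+c 2), (c 0-c 5)/(2*t), -(c 4/(2*t^2)),
                -((c 0+c 5)/(2*t)), t*(c 2-c 1) ]
  map_add' := by intro u v; funext k; fin_cases k <;> simp [Matrix.cons_val_succ] <;> ring
  map_smul' := by intro c u; funext k; fin_cases k <;> simp [Matrix.cons_val_succ] <;> ring

def BL (t : ℝ) : (Fin 6 → ℝ) →ₗ[ℝ] (Fin 6 → ℝ) where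
  toFun y := ![ t*(y 2 - y 4), (y 1 - y 5)/(2*t), (y 1 + y 5)/(2*t),
                -(y 0/(2*t^2)), -(2*t^2*y 3), -(t*(y 2 + y 4)) ]
  map_add' := by intro u v; funext k; fin_cases k <;> simp [Matrix.cons_val_succ] <;> ring
  map_smul' := by intro c u; funext k; fin_cases k <;> simp [Matrix.cons_val_succ] <;> ring

lemma ABid (t : ℝ) (ht : t ≠ 0) : (AL t).comp (BL t) = LinearMap.id := by
  apply LinearMap.ext; intro y; funext k
  fin_cases k <;> simp [AL, BL, Matrix.cons_val_succ] <;> field_simp <;> ring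

lemma BAid (t : ℝ) (ht : t ≠ 0) : (BL t).comp (AL t) = LinearMap.id := by
  apply LinearMap.ext; intro y; funext k
  fin_cases k <;> simp [AL, BL, Matrix.cons_val_succ] <;> field_simp <;> ring

@[simp] lemma brL_apply (η : ℝ) (u v : Fin 6 → ℝ) : brL η u v = brf η u v := rfl

@[simp] lemma AL_apply (t : ℝ) (c : Fin 6 → ℝ) :
    AL t c = ![ -(2*t^2*c 3), t*(c 1+c 2), (c 0-c 5)/(2*t), -(c 4/(2*t^2)),
                -((c 0+c 5)/(2*t)), t*(c 2-c 1) ] := rfl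

end


/-- For `η > 0`, the listed brackets define a Lie algebra structure `D'`
on the 6-dimensional space with basis `{X₀,X₁,X₂,x⁰,x¹,x²}` (the classical double
`D(iso(1,1))`), and the linear map `ψ' : g_{η²} → D'` determined by the given formulas
is a Lie algebra isomorphism. -/
theorem double_iso11_exists_and_iso
    (η : ℝ) (hη : 0 < η) (g : Type*) [LieRing g] [LieAlgebra ℝ g]
    (J P0 P1 P2 K1 K2 : g)
    (hind : LinearIndependent ℝ ![J, P0, P1, P2, K1, K2])
    (hspan : Submodule.span ℝ (Set.range ![J, P0, P1, P2, K1, K2]) = ⊤)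
    (hJP1 : ⁅J, P1⁆ = P2) (hJP2 : ⁅J, P2⁆ = -P1)
    (hJK1 : ⁅J, K1⁆ = K2) (hJK2 : ⁅J, K2⁆ = -K1) (hJP0 : ⁅J, P0⁆ = 0)
    (hP1K1 : ⁅P1, K1⁆ = -P0) (hP2K2 : ⁅P2, K2⁆ = -P0)
    (hP1K2 : ⁅P1, K2⁆ = 0) (hP2K1 : ⁅P2, K1⁆ = 0)
    (hP0K1 : ⁅P0, K1⁆ = -P1) (hP0K2 : ⁅P0, K2⁆ = -P2)
    (hK1K2 : ⁅K1, K2⁆ = -J)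
    (hP0P1 : ⁅P0, P1⁆ = (η ^ 2) • K1) (hP0P2 : ⁅P0, P2⁆ = (η ^ 2) • K2)
    (hP1P2 : ⁅P1, P2⁆ = -((η ^ 2) • J)) :
    let X0 : Fin 6 → ℝ := Pi.single 0 1
    let X1 : Fin 6 → ℝ := Pi.single 1 1
    let X2 : Fin 6 → ℝ := Pi.single 2 1
    let x0 : Fin 6 → ℝ := Pi.single 3 1
    let x1 : Fin 6 → ℝ := Pi.single 4 1
    let x2 : Fin 6 → ℝ := Pi.single 5 1
    ∃ br : (Fin 6 → ℝ) →ₗ[ℝ] (Fin 6 → ℝ) →ₗ[ℝ] (Fin 6 → ℝ),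
      -- the bracket is alternating and satisfies the Jacobi identity
      (∀ v, br v v = 0) ∧
      (∀ u v w, br (br u v) w + br (br v w) u + br (br w u) v = 0) ∧
      -- the defining structure constants of `D(iso(1,1))`
      br X0 X1 = -X2 ∧ br X0 X2 = -X1 ∧ br X1 X2 = 0 ∧
      br x0 x1 = η • x1 ∧ br x0 x2 = η • x2 ∧ br x1 x2 = 0 ∧
      br x0 X0 = 0 ∧ br x0 X1 = -(η • X1) ∧ br x0 X2 = -(η • X2) ∧
      br x1 X0 = -x2 ∧ br x1 X1 = η • X0 ∧ br x1 X2 = x0 ∧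
      br x2 X0 = -x1 ∧ br x2 X1 = x0 ∧ br x2 X2 = η • X0 ∧
      -- and ψ' is a Lie algebra isomorphism from g_{η²} onto this Lie algebra
      ∃ ψ : g →ₗ[ℝ] (Fin 6 → ℝ),
        Function.Bijective ψ ∧
        (∀ u v : g, ψ ⁅u, v⁆ = br (ψ u) (ψ v)) ∧
        ψ J = (Real.sqrt (2 * η))⁻¹ • (X2 - x1) ∧
        ψ K1 = -(η⁻¹ • x0) ∧
        ψ K2 = -((Real.sqrt (2 * η))⁻¹ • (X2 + x1)) ∧
        ψ P0 = Real.sqrt (η / 2) • (X1 - x2) ∧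
        ψ P1 = Real.sqrt (η / 2) • (X1 + x2) ∧
        ψ P2 = -(η • X0) := by
  set t := Real.sqrt (η / 2) with ht_def
  intro X0 X1 X2 x0 x1 x2
  have ht0 : 0 < t := Real.sqrt_pos.2 (by positivity)
  have ht : t ≠ 0 := ne_of_gt ht0
  have ht2 : t ^ 2 = η / 2 := Real.sq_sqrt (by positivity)
  have hη_eq : η = 2 * t ^ 2 := by rw [ht2]; ring
  have hs : Real.sqrt (2 * η) = 2 * t := by
    have h4 : (2 : ℝ) * η = (2 * t) ^ 2 := by nlinarith [ht2]
    rw [h4, Real.sqrt_sq (by positivity)]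
  have hsp : ⊤ ≤ Submodule.span ℝ (Set.range ![J, P0, P1, P2, K1, K2]) := hspan.ge
  let b : Module.Basis (Fin 6) ℝ g := Module.Basis.mk hind hsp
  let E : (Fin 6 → ℝ) ≃ₗ[ℝ] (Fin 6 → ℝ) :=
    LinearEquiv.ofLinear (AL t) (BL t) (ABid t ht) (BAid t ht)
  let ψe : g ≃ₗ[ℝ] (Fin 6 → ℝ) := b.equivFun.trans E
  let ψ : g →ₗ[ℝ] (Fin 6 → ℝ) := ψe.toLinearMap
  have hψ_apply : ∀ x, ψ x = AL t (b.equivFun x) := fun x => by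
    simp only [ψ, ψe, E, LinearEquiv.coe_coe, LinearEquiv.trans_apply, LinearEquiv.ofLinear_apply]
  have hb : ∀ i : Fin 6, b i = ![J, P0, P1, P2, K1, K2] i := fun i => Module.Basis.mk_apply hind hsp i
  have hb0 : b 0 = J := by simpa using hb 0
  have hb1 : b 1 = P0 := by simpa using hb 1
  have hb2 : b 2 = P1 := by simpa using hb 2
  have hb3 : b 3 = P2 := by simpa using hb 3
  have hb4 : b 4 = K1 := by simpa using hb 4
  have hb5 : b 5 = K2 := by simpa using hb 5
  have hrep : ∀ i : Fin 6, ψ (b i) = AL t (fun j => if i = j then 1 else 0) := by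
    intro i; rw [hψ_apply]; congr 1; funext j; exact b.equivFun_self i j
  have hψJ : ψ J = ![0, 0, 1/(2*t), 0, -(1/(2*t)), 0] := by
    rw [← hb0, hrep 0]; funext k; fin_cases k <;> simp <;> (try field_simp) <;> (try ring)
  have hψP0 : ψ P0 = ![0, t, 0, 0, 0, -t] := by
    rw [← hb1, hrep 1]; funext k; fin_cases k <;> simp <;> (try field_simp) <;> (try ring)
  have hψP1 : ψ P1 = ![0, t, 0, 0, 0, t] := by
    rw [← hb2, hrep 2]; funext k; fin_cases k <;> simp <;> (try field_simp) <;> (try ring)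
  have hψP2 : ψ P2 = ![-(2*t^2), 0, 0, 0, 0, 0] := by
    rw [← hb3, hrep 3]; funext k; fin_cases k <;> simp <;> (try field_simp) <;> (try ring)
  have hψK1 : ψ K1 = ![0, 0, 0, -(1/(2*t^2)), 0, 0] := by
    rw [← hb4, hrep 4]; funext k; fin_cases k <;> simp <;> (try field_simp) <;> (try ring)
  have hψK2 : ψ K2 = ![0, 0, -(1/(2*t)), 0, -(1/(2*t)), 0] := by
    rw [← hb5, hrep 5]; funext k; fin_cases k <;> simp <;> (try field_simp) <;> (try ring)
  -- reversed bracket relations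
  have hP1J : ⁅P1, J⁆ = -P2 := by rw [← lie_skew, hJP1]
  have hP2J : ⁅P2, J⁆ = P1 := by rw [← lie_skew, hJP2, neg_neg]
  have hK1J : ⁅K1, J⁆ = -K2 := by rw [← lie_skew, hJK1]
  have hK2J : ⁅K2, J⁆ = K1 := by rw [← lie_skew, hJK2, neg_neg]
  have hP0J : ⁅P0, J⁆ = 0 := by rw [← lie_skew, hJP0, neg_zero]
  have hK1P1 : ⁅K1, P1⁆ = P0 := by rw [← lie_skew, hP1K1, neg_neg]
  have hK2P2 : ⁅K2, P2⁆ = P0 := by rw [← lie_skew, hP2K2, neg_neg]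
  have hK2P1 : ⁅K2, P1⁆ = 0 := by rw [← lie_skew, hP1K2, neg_zero]
  have hK1P2 : ⁅K1, P2⁆ = 0 := by rw [← lie_skew, hP2K1, neg_zero]
  have hK1P0 : ⁅K1, P0⁆ = P1 := by rw [← lie_skew, hP0K1, neg_neg]
  have hK2P0 : ⁅K2, P0⁆ = P2 := by rw [← lie_skew, hP0K2, neg_neg]
  have hK2K1 : ⁅K2, K1⁆ = J := by rw [← lie_skew, hK1K2, neg_neg]
  have hP1P0 : ⁅P1, P0⁆ = -((η ^ 2) • K1) := by rw [← lie_skew, hP0P1]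
  have hP2P0 : ⁅P2, P0⁆ = -((η ^ 2) • K2) := by rw [← lie_skew, hP0P2]
  have hP2P1 : ⁅P2, P1⁆ = (η ^ 2) • J := by rw [← lie_skew, hP1P2, neg_neg]
  have hom : ∀ u v : g, ψ ⁅u, v⁆ = brL η (ψ u) (ψ v) := by
    have hFG : LinearMap.mk₂ ℝ (fun (u v : g) => ψ ⁅u, v⁆)
        (fun u u' v => by simp only [add_lie, map_add])
        (fun c u v => by simp only [smul_lie, map_smul, RingHom.id_apply])
        (fun u v v' => by simp only [lie_add, map_add])
        (fun c u v => by simp only [lie_smul, map_smul, RingHom.id_apply]) = (brL η).compl₁₂ ψ ψ := by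
      refine b.ext fun i => b.ext fun j => ?_
      rw [LinearMap.mk₂_apply, LinearMap.compl₁₂_apply, hb i, hb j]
      fin_cases i <;> fin_cases j <;> funext k <;> fin_cases k <;>
        simp [brf, lie_self, hJP0, hJP1, hJP2, hJK1, hJK2, hP0J, hP0K1, hP0K2, hP0P1, hP0P2,
          hP1J, hP1P0, hP1P2, hP1K1, hP1K2, hP2J, hP2P0, hP2P1, hP2K1, hP2K2,
          hK1J, hK1P0, hK1P1, hK1P2, hK1K2, hK2J, hK2P0, hK2P1, hK2P2, hK2K1,
          hψJ, hψP0, hψP1, hψP2, hψK1, hψK2] <;>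
        (try rw [hη_eq]) <;> (try field_simp) <;> (try ring)
    intro u v
    have h1 := LinearMap.congr_fun (LinearMap.congr_fun hFG u) v
    simpa [LinearMap.mk₂_apply, LinearMap.compl₁₂_apply] using h1
  refine ⟨brL η, ?_, ?_, ?_, ?_, ?_, ?_, ?_, ?_, ?_, ?_, ?_, ?_, ?_, ?_, ?_, ?_, ?_,
    ψ, ψe.bijective, hom, ?_, ?_, ?_, ?_, ?_, ?_⟩
  · intro v; funext k; fin_cases k <;> simp [brf] <;> ring
  · intro u v w; funext k; fin_cases k <;> simp [brf] <;> ring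
  · funext k; fin_cases k <;> simp [brf, X0, X1, X2, Pi.single_apply] <;> (try ring)
  · funext k; fin_cases k <;> simp [brf, X0, X1, X2, Pi.single_apply] <;> (try ring)
  · funext k; fin_cases k <;> simp [brf, X1, X2, Pi.single_apply] <;> (try ring)
  · funext k; fin_cases k <;> simp [brf, x0, x1, Pi.single_apply] <;> (try ring)
  · funext k; fin_cases k <;> simp [brf, x0, x2, Pi.single_apply] <;> (try ring)
  · funext k; fin_cases k <;> simp [brf, x1, x2, Pi.single_apply] <;> (try ring)
  · funext k; fin_cases k <;> simp [brf, x0, X0, Pi.single_apply] <;> (try ring)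
  · funext k; fin_cases k <;> simp [brf, x0, X1, Pi.single_apply] <;> (try ring)
  · funext k; fin_cases k <;> simp [brf, x0, X2, Pi.single_apply] <;> (try ring)
  · funext k; fin_cases k <;> simp [brf, x1, X0, x2, Pi.single_apply] <;> (try ring)
  · funext k; fin_cases k <;> simp [brf, x1, X1, X0, Pi.single_apply] <;> (try ring)
  · funext k; fin_cases k <;> simp [brf, x1, X2, x0, Pi.single_apply] <;> (try ring)
  · funext k; fin_cases k <;> simp [brf, x2, X0, x1, Pi.single_apply] <;> (try ring)
  · funext k; fin_cases k <;> simp [brf, x2, X1, x0, Pi.single_apply] <;> (try ring)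
  · funext k; fin_cases k <;> simp [brf, x2, X2, X0, Pi.single_apply] <;> (try ring)
  · rw [hψJ, hs]; funext k; fin_cases k <;> simp [X2, x1, Pi.single_apply] <;> (try ring)
  · rw [hψK1, hη_eq]; funext k; fin_cases k <;> simp [x0, Pi.single_apply] <;> (try ring)
  · rw [hψK2, hs]; funext k; fin_cases k <;> simp [X2, x1, Pi.single_apply] <;> (try ring)
  · rw [hψP0]; funext k; fin_cases k <;> simp [X1, x2, Pi.single_apply] <;> (try ring)
  · rw [hψP1]; funext k; fin_cases k <;> simp [X1, x2, Pi.single_apply] <;> (try ring)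
  · rw [hψP2, hη_eq]; funext k; fin_cases k <;> simp [X0, Pi.single_apply] <;> (try ring)
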